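/- arXiv:1206.3131 — 3 statements merged into one kernel-verified Lean document; each statement's English description precedes it below -/
import Mathlib

section
/- Let λ = (λ_1 ≥ ⋯ ≥ λ_N ≥ 0) be a partition with at most N parts and let T be a column-strict tableau of shape λ with entries in {1,…,N}, with associated weight matrix θ = (θ_{i,k}) ∈ Pol_λ. Then the specialization z_i = 𝔱^{N−i} q^{λ_i} (1 ≤ i ≤ N) in c_N is well defined (no denominator factor vanishes) and c_N(θ; 𝔱^{N−1}q^{λ_1}, 𝔱^{N−2}q^{λ_2},…, q^{λ_N}; q,𝔱) = ψ_T(q,𝔱) as elements of the rational function field ℚ(q,𝔱). -/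
/-!
STATEMENT 4: for a column-strict tableau `T` of shape `λ` with weight matrix
`θ`, the specialization `z_i = 𝔱^{N-i} q^{λ_i}` in `c_N` is well defined (no
denominator q-Pochhammer factor vanishes) and
`c_N(θ; 𝔱^{N-1}q^{λ_1},…,q^{λ_N}; q,𝔱) = ψ_T(q,𝔱)` in `ℚ(q,𝔱)`.
Variables: `X 0 = q`, `X 1 = 𝔱`.
-/

noncomputable section
open Finset

/-- The q-Pochhammer symbol `(a;q)_n`. -/
def qPoch {K : Type*} [CommRing K] (a q : K) (n : ℕ) : K :=
  ∏ k ∈ Finset.range n, (1 - a * q ^ k)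

/-- `S_{i,j,k} = Σ_{a=k+1}^N (θ_{i,a} − θ_{j,a})`. -/
def Sijk (N : ℕ) (θ : ℕ → ℕ → ℕ) (i j k : ℕ) : ℤ :=
  ∑ a ∈ Finset.Icc (k+1) N, ((θ i a : ℤ) - (θ j a : ℤ))

/-- The coefficient `c_N(θ; z₁,…,z_N; q,𝔱)`. -/
def cfun {K : Type*} [Field K] (N : ℕ) (θ : ℕ → ℕ → ℕ) (q t : K) (z : ℕ → K) : K :=
  ∏ k ∈ Finset.Icc 2 N, ∏ i ∈ Finset.Icc 1 (k-1), ∏ j ∈ Finset.Icc i (k-1),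
    ((qPoch (q ^ (Sijk N θ i (j+1) k) * t * z (j+1) / z i) q (θ i k) /
      qPoch (q ^ (Sijk N θ i (j+1) k) * q * z (j+1) / z i) q (θ i k)) *
     (qPoch (q ^ (-(θ j k : ℤ) + Sijk N θ i j k) * (q / t) * z j / z i) q (θ i k) /
      qPoch (q ^ (-(θ j k : ℤ) + Sijk N θ i j k) * z j / z i) q (θ i k)))

/-- `Λ` encodes a column-strict tableau of shape `lam`. -/
def IsTab (N : ℕ) (lam : ℕ → ℕ) (Λ : ℕ → ℕ → ℕ) : Prop :=
  (∀ k i, ¬(1 ≤ i ∧ i ≤ k ∧ k ≤ N) → Λ k i = 0) ∧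
  (∀ i, 1 ≤ i → Λ N i = lam i) ∧
  (∀ k, 1 ≤ k → k ≤ N → ∀ i, 1 ≤ i → Λ (k-1) i ≤ Λ k i ∧ Λ k (i+1) ≤ Λ (k-1) i)

/-- the weight matrix of a chain. -/
def thetaOf (Λ : ℕ → ℕ → ℕ) : ℕ → ℕ → ℕ := fun i j => Λ j i - Λ (j-1) i

/-- Macdonald's tableau coefficient `ψ_T(q,𝔱)`, in closed q-Pochhammer form. -/
def psiT (N : ℕ) {K : Type*} [Field K] (Λ : ℕ → ℕ → ℕ) (q t : K) : K :=
  ∏ k ∈ Finset.Icc 1 N, ∏ i ∈ Finset.Icc 1 (k-1), ∏ j ∈ Finset.Icc i (k-1),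
    (qPoch (q ^ (-(Λ k i : ℤ) + (Λ (k-1) j : ℤ) + 1) * t ^ ((i:ℤ) - (j:ℤ) - 1)) q
        (Λ k i - Λ (k-1) i) /
     qPoch (q ^ (-(Λ k i : ℤ) + (Λ (k-1) j : ℤ)) * t ^ ((i:ℤ) - (j:ℤ))) q
        (Λ k i - Λ (k-1) i)) *
    (qPoch (q ^ (-(Λ k i : ℤ) + (Λ k (j+1) : ℤ)) * t ^ ((i:ℤ) - (j:ℤ))) q
        (Λ k i - Λ (k-1) i) /
     qPoch (q ^ (-(Λ k i : ℤ) + (Λ k (j+1) : ℤ) + 1) * t ^ ((i:ℤ) - (j:ℤ) - 1)) q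
        (Λ k i - Λ (k-1) i))

abbrev Fqt := FractionRing (MvPolynomial (Fin 2) ℚ)

def qv : Fqt := algebraMap (MvPolynomial (Fin 2) ℚ) Fqt (MvPolynomial.X 0)
def tv : Fqt := algebraMap (MvPolynomial (Fin 2) ℚ) Fqt (MvPolynomial.X 1)

/-- the specialization `z_i = 𝔱^{N-i} q^{λ_i}`. -/
def zspec (N : ℕ) (lam : ℕ → ℕ) : ℕ → Fqt := fun i => tv ^ (N - i) * qv ^ (lam i)

/- ===== auxiliary lemmas ===== -/

lemma qv_ne : qv ≠ 0 := by
  simp [qv, IsFractionRing.to_map_eq_zero_iff, MvPolynomial.X_ne_zero]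
lemma tv_ne : tv ≠ 0 := by
  simp [tv, IsFractionRing.to_map_eq_zero_iff, MvPolynomial.X_ne_zero]

lemma qt_mul (a b c d : ℤ) : (qv ^ a * tv ^ b) * (qv ^ c * tv ^ d) = qv ^ (a+c) * tv ^ (b+d) := by
  rw [zpow_add₀ qv_ne, zpow_add₀ tv_ne]; ring

lemma lemA (m n m' n' : ℕ) (h : (qv:Fqt)^m * tv^n = qv^m' * tv^n') : m = m' ∧ n = n' := by
  have inj := IsFractionRing.injective (MvPolynomial (Fin 2) ℚ) Fqt
  have hpoly : (MvPolynomial.X 0 : MvPolynomial (Fin 2) ℚ)^m * MvPolynomial.X 1^n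
      = MvPolynomial.X 0^m' * MvPolynomial.X 1^n' := by
    apply inj
    simpa [qv, tv, map_mul, map_pow] using h
  constructor
  · have e2 := congrArg (MvPolynomial.eval (fun i : Fin 2 => if i = 0 then (2:ℚ) else 1)) hpoly
    simpa using e2
  · have e2 := congrArg (MvPolynomial.eval (fun i : Fin 2 => if i = 0 then (1:ℚ) else 2)) hpoly
    simpa using e2

lemma lemB (a b : ℤ) (h : qv^a * tv^b = 1) : a = 0 ∧ b = 0 := by
  have h2 : (qv^a * tv^b) * (qv^(((-a).toNat:ℤ)) * tv^(((-b).toNat:ℤ)))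
      = qv^(((-a).toNat:ℤ)) * tv^(((-b).toNat:ℤ)) := by rw [h, one_mul]
  rw [qt_mul] at h2
  have ea : a + ((-a).toNat:ℤ) = ((a.toNat:ℕ):ℤ) := by omega
  have eb : b + ((-b).toNat:ℤ) = ((b.toNat:ℕ):ℤ) := by omega
  rw [ea, eb, zpow_natCast, zpow_natCast, zpow_natCast, zpow_natCast] at h2
  obtain ⟨h1, h2⟩ := lemA _ _ _ _ h2
  omega

lemma zspec_ne (N : ℕ) (lam : ℕ → ℕ) (i : ℕ) : zspec N lam i ≠ 0 :=
  mul_ne_zero (pow_ne_zero _ tv_ne) (pow_ne_zero _ qv_ne)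

lemma spec_ratio (N : ℕ) (lam : ℕ → ℕ) {i j : ℕ} (hi : i ≤ N) (hj : j ≤ N) :
    zspec N lam j / zspec N lam i = qv ^ ((lam j : ℤ) - lam i) * tv ^ ((i:ℤ) - j) := by
  have e1 : (tv : Fqt) ^ (N - j) = tv ^ ((N:ℤ) - (j:ℤ)) := by
    rw [← zpow_natCast]; congr 1; omega
  have e2 : (tv : Fqt) ^ (N - i) = tv ^ ((N:ℤ) - (i:ℤ)) := by
    rw [← zpow_natCast]; congr 1; omega
  have e3 : (qv : Fqt) ^ (lam j) = qv ^ ((lam j : ℤ)) := (zpow_natCast _ _).symm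
  have e4 : (qv : Fqt) ^ (lam i) = qv ^ ((lam i : ℤ)) := (zpow_natCast _ _).symm
  have hz : zspec N lam i ≠ 0 := zspec_ne N lam i
  rw [div_eq_iff hz]
  unfold zspec
  rw [e1, e2, e3, e4, show (qv ^ ((lam j:ℤ) - lam i) * tv ^ ((i:ℤ) - j)) * (tv ^ ((N:ℤ)-(i:ℤ)) * qv ^ ((lam i:ℤ)))
      = (qv ^ ((lam j:ℤ) - lam i) * tv ^ ((i:ℤ) - j)) * (qv ^ ((lam i:ℤ)) * tv ^ ((N:ℤ)-(i:ℤ))) from by ring,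
    qt_mul, show ((lam j:ℤ) - lam i) + lam i = (lam j:ℤ) from by ring,
    show ((i:ℤ) - j) + ((N:ℤ) - i) = (N:ℤ) - j from by ring, mul_comm]

lemma canon (N : ℕ) (lam : ℕ → ℕ) {i j : ℕ} (hi : i ≤ N) (hj : j ≤ N) (a b : ℤ) :
    qv ^ a * tv ^ b * zspec N lam j / zspec N lam i
      = qv ^ (a + lam j - lam i) * tv ^ (b + i - j) := by
  rw [mul_div_assoc, spec_ratio N lam hi hj, qt_mul]
  congr 1 <;> [skip; skip] <;> congr 1 <;> ring

lemma canon1 (N : ℕ) (lam : ℕ → ℕ) {i j : ℕ} (hi : i ≤ N) (hj : j ≤ N) (S : ℤ) :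
    qv ^ S * tv * zspec N lam j / zspec N lam i
      = qv ^ (S + lam j - lam i) * tv ^ (1 + (i:ℤ) - j) := by
  have : qv ^ S * tv = qv ^ S * tv ^ (1:ℤ) := by rw [zpow_one]
  rw [this, canon N lam hi hj]

lemma canon2 (N : ℕ) (lam : ℕ → ℕ) {i j : ℕ} (hi : i ≤ N) (hj : j ≤ N) (S : ℤ) :
    qv ^ S * qv * zspec N lam j / zspec N lam i
      = qv ^ (S + 1 + lam j - lam i) * tv ^ ((i:ℤ) - j) := by
  have h1 : qv ^ S * qv = qv ^ (S+1) * tv ^ (0:ℤ) := by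
    rw [zpow_zero, mul_one, zpow_add_one₀ qv_ne]
  rw [h1, canon N lam hi hj, show ((0:ℤ) + (i:ℤ) - (j:ℤ)) = (i:ℤ) - j from by ring]

lemma canon3 (N : ℕ) (lam : ℕ → ℕ) {i j : ℕ} (hi : i ≤ N) (hj : j ≤ N) (S : ℤ) :
    qv ^ S * (qv / tv) * zspec N lam j / zspec N lam i
      = qv ^ (S + 1 + lam j - lam i) * tv ^ (-1 + (i:ℤ) - j) := by
  have h1 : qv ^ S * (qv / tv) = qv ^ (S+1) * tv ^ (-1:ℤ) := by
    rw [zpow_add_one₀ qv_ne, zpow_neg, zpow_one, div_eq_mul_inv]; ring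
  rw [h1, canon N lam hi hj]

lemma canon4 (N : ℕ) (lam : ℕ → ℕ) {i j : ℕ} (hi : i ≤ N) (hj : j ≤ N) (S : ℤ) :
    qv ^ S * zspec N lam j / zspec N lam i
      = qv ^ (S + lam j - lam i) * tv ^ ((i:ℤ) - j) := by
  have h := canon N lam hi hj S 0
  rw [zpow_zero, mul_one] at h
  rw [h, show ((0:ℤ) + (i:ℤ) - (j:ℤ)) = (i:ℤ) - j from by ring]

lemma qPoch_ne (a b : ℤ) (n : ℕ) (h : ∀ m : ℕ, m < n → ¬(a + m = 0 ∧ b = 0)) :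
    qPoch (qv ^ a * tv ^ b) qv n ≠ 0 := by
  unfold qPoch
  refine Finset.prod_ne_zero_iff.mpr ?_
  intro m hm
  have harg : qv ^ a * tv ^ b * qv ^ m = qv ^ (a + m) * tv ^ b := by
    rw [← zpow_natCast qv m, zpow_add₀ qv_ne]; ring
  rw [harg]
  intro heq
  have h1 : qv ^ (a + (m:ℤ)) * tv ^ b = 1 := by linear_combination -heq
  exact h m (Finset.mem_range.mp hm) ⟨(lemB _ _ h1).1, (lemB _ _ h1).2⟩

lemma tele (g : ℕ → ℤ) (k : ℕ) : ∀ N : ℕ, k ≤ N →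
    ∑ a ∈ Finset.Icc (k+1) N, (g a - g (a-1)) = g N - g k := by
  intro N
  induction N with
  | zero => intro h; interval_cases k; simp
  | succ n ih =>
    intro h
    rcases Nat.lt_or_ge k (n+1) with h' | h'
    · rw [Finset.sum_Icc_succ_top (by omega), ih (by omega)]
      simp only [Nat.add_sub_cancel]
      ring
    · have : k = n+1 := by omega
      subst this
      rw [Finset.Icc_eq_empty (by omega)]
      simp

lemma prod_Icc_one_eq_two {M : Type*} [CommMonoid M] (N : ℕ) (f : ℕ → M) (h1 : f 1 = 1) :
    ∏ k ∈ Finset.Icc 1 N, f k = ∏ k ∈ Finset.Icc 2 N, f k := by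
  refine (Finset.prod_subset (Finset.Icc_subset_Icc one_le_two le_rfl) ?_).symm
  intro x hx hx'
  simp only [Finset.mem_Icc] at hx hx'
  have : x = 1 := by omega
  subst this; exact h1

theorem c_specializes_to_psi (N : ℕ) (lam : ℕ → ℕ)
    (hpart : ∀ i, 1 ≤ i → lam (i+1) ≤ lam i) (hsupp : ∀ i, N < i → lam i = 0)
    (Λ : ℕ → ℕ → ℕ) (hT : IsTab N lam Λ) :
    (∀ k ∈ Finset.Icc 2 N, ∀ i ∈ Finset.Icc 1 (k-1), ∀ j ∈ Finset.Icc i (k-1),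
      qPoch (qv ^ (Sijk N (thetaOf Λ) i (j+1) k) * qv * zspec N lam (j+1) / zspec N lam i)
          qv (thetaOf Λ i k) ≠ 0 ∧
      qPoch (qv ^ (-(thetaOf Λ j k : ℤ) + Sijk N (thetaOf Λ) i j k)
            * zspec N lam j / zspec N lam i) qv (thetaOf Λ i k) ≠ 0) ∧
    cfun N (thetaOf Λ) qv tv (zspec N lam) = psiT N Λ qv tv := by
  obtain ⟨hT0, hTN, hTmono⟩ := hT
  have thcast : ∀ i k, 1 ≤ i → 1 ≤ k → k ≤ N → (thetaOf Λ i k : ℤ) = (Λ k i : ℤ) - Λ (k-1) i := by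
    intro i k hi hk hkN
    have := (hTmono k hk hkN i hi).1
    simp only [thetaOf]
    omega
  have Sform : ∀ i j k, 1 ≤ i → 1 ≤ j → k ≤ N →
      Sijk N (thetaOf Λ) i j k = ((lam i : ℤ) - Λ k i) - ((lam j : ℤ) - Λ k j) := by
    intro i j k hi hj hk
    unfold Sijk
    have hs : ∑ a ∈ Finset.Icc (k+1) N, ((thetaOf Λ i a : ℤ) - (thetaOf Λ j a : ℤ))
        = ∑ a ∈ Finset.Icc (k+1) N,
            ((((Λ a i:ℤ) - Λ (a-1) i)) - (((Λ a j:ℤ) - Λ (a-1) j))) := by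
      apply Finset.sum_congr rfl
      intro a ha
      obtain ⟨ha1, ha2⟩ := Finset.mem_Icc.mp ha
      rw [thcast i a hi (by omega) ha2, thcast j a hj (by omega) ha2]
    rw [hs, Finset.sum_sub_distrib, tele _ k N hk, tele _ k N hk, hTN i hi, hTN j hj]
  constructor
  · -- nonvanishing of denominators
    intro k hk i hi j hj
    simp only [Finset.mem_Icc] at hk hi hj
    obtain ⟨hk2, hkN⟩ := hk
    obtain ⟨hi1, hik⟩ := hi
    obtain ⟨hij, hjk⟩ := hj
    have hiN : i ≤ N := by omega
    have hjN : j ≤ N := by omega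
    have hj1N : j + 1 ≤ N := by omega
    constructor
    · rw [canon2 N lam hiN hj1N]
      apply qPoch_ne
      intro m hm ⟨h1, h2⟩
      omega
    · rw [canon4 N lam hiN hjN]
      apply qPoch_ne
      intro m hm ⟨h1, h2⟩
      have hji : i = j := by omega
      subst hji
      have hS0 : Sijk N (thetaOf Λ) i i k = 0 := by simp [Sijk]
      rw [hS0] at h1
      omega
  · -- the equality
    unfold cfun psiT
    rw [prod_Icc_one_eq_two N _ (by
      rw [show (1:ℕ) - 1 = 0 from rfl, Finset.Icc_eq_empty (by norm_num), Finset.prod_empty])]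
    refine Finset.prod_congr rfl fun k hk => Finset.prod_congr rfl fun i hi =>
      Finset.prod_congr rfl fun j hj => ?_
    simp only [Finset.mem_Icc] at hk hi hj
    obtain ⟨hk2, hkN⟩ := hk
    obtain ⟨hi1, hik⟩ := hi
    obtain ⟨hij, hjk⟩ := hj
    have hiN : i ≤ N := by omega
    have hjN : j ≤ N := by omega
    have hj1N : j + 1 ≤ N := by omega
    have hS1 := Sform i (j+1) k hi1 (by omega) hkN
    have hS2 := Sform i j k hi1 (by omega) hkN
    have hth := thcast j k (by omega) (by omega) hkN
    have hthi : thetaOf Λ i k = Λ k i - Λ (k-1) i := rfl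
    rw [canon1 N lam hiN hj1N, canon2 N lam hiN hj1N, canon3 N lam hiN hjN,
      canon4 N lam hiN hjN, hthi,
      show Sijk N (thetaOf Λ) i (j+1) k + ((lam (j+1) : ℤ)) - ((lam i : ℤ))
          = -(Λ k i : ℤ) + (Λ k (j+1) : ℤ) from by rw [hS1]; ring,
      show Sijk N (thetaOf Λ) i (j+1) k + 1 + ((lam (j+1) : ℤ)) - ((lam i : ℤ))
          = -(Λ k i : ℤ) + (Λ k (j+1) : ℤ) + 1 from by rw [hS1]; ring,
      show -(thetaOf Λ j k : ℤ) + Sijk N (thetaOf Λ) i j k + 1 + ((lam j : ℤ)) - ((lam i : ℤ))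
          = -(Λ k i : ℤ) + (Λ (k-1) j : ℤ) + 1 from by rw [hth, hS2]; ring,
      show -(thetaOf Λ j k : ℤ) + Sijk N (thetaOf Λ) i j k + ((lam j : ℤ)) - ((lam i : ℤ))
          = -(Λ k i : ℤ) + (Λ (k-1) j : ℤ) from by rw [hth, hS2]; ring,
      show (1:ℤ) + (i:ℤ) - ((j:ℕ)+1:ℕ) = (i:ℤ) - (j:ℤ) from by push_cast; ring,
      show ((i:ℤ)) - (((j:ℕ)+1:ℕ):ℤ) = (i:ℤ) - (j:ℤ) - 1 from by push_cast; ring,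
      show (-1:ℤ) + (i:ℤ) - (j:ℤ) = (i:ℤ) - (j:ℤ) - 1 from by ring]
    exact mul_comm _ _
end
end

section
/- Let λ = (λ_1 ≥ ⋯ ≥ λ_N ≥ 0) be a partition with at most N parts. For every θ ∈ M^(N) that does NOT belong to Pol_λ, i.e. for which the inequality 0 ≤ θ_{i,j} ≤ λ_i − λ_{i+1} − Σ_{k=j+1}^{N}(θ_{i,k} − θ_{i+1,k}) fails for some 1 ≤ i < j ≤ N, the specialization z_i = 𝔱^{N−i} q^{λ_i} yields c_N(θ; 𝔱^{N−1}q^{λ_1}, 𝔱^{N−2}q^{λ_2},…, q^{λ_N}; q,𝔱) = 0 in ℚ(q,𝔱) (the numerator acquires a vanishing q-Pochhammer factor while the denominator stays nonzero). Hence under this specialization the formal series f_N(y,z;q,𝔱) = y^λ Σ_{θ∈M^(N)} c_N(θ;z;q,𝔱)∏_{i<j}(y_j/y_i)^{θ_{ij}} terminates to a finite sum over θ ∈ Pol_λ. -/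
/-!
STATEMENT 5: under the principal specialization `z_i = 𝔱^{N-i}q^{λ_i}`, the
coefficient `c_N(θ;…;q,𝔱)` vanishes for every `θ ∈ M^(N) \ Pol_λ`; hence the
series `f_N/y^λ` terminates to the finite sum over `θ ∈ Pol_λ` (stated as an
equality of the coefficient functions of the two generating series in
`MvPowerSeries ℕ ℚ(q,𝔱)`, the variables being `u_m = y_{m+1}/y_m`).
Variables of the coefficient field: `X 0 = q`, `X 1 = 𝔱`.
-/

noncomputable section
open Finset

/-- θ belongs to M^(N). -/
def IsUT (N : ℕ) (θ : ℕ → ℕ → ℕ) : Prop :=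
  ∀ i j, ¬(1 ≤ i ∧ i < j ∧ j ≤ N) → θ i j = 0

/-- the polytope inequalities defining `Pol_λ` (for `θ ∈ M^(N)`). -/
def PolIneq (N : ℕ) (lam : ℕ → ℕ) (θ : ℕ → ℕ → ℕ) : Prop :=
  ∀ i j, 1 ≤ i → i < j → j ≤ N →
    (θ i j : ℤ) ≤ (lam i : ℤ) - (lam (i+1) : ℤ)
      - ∑ k ∈ Finset.Icc (j+1) N, ((θ i k : ℤ) - (θ (i+1) k : ℤ))

/-- `u_m`-degree of the monomial `∏_{i<j}(y_j/y_i)^{θ_{ij}}`. -/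
def wt (N : ℕ) (θ : ℕ → ℕ → ℕ) (m : ℕ) : ℕ :=
  ∑ i ∈ Finset.Icc 1 m, ∑ j ∈ Finset.Icc (m+1) N, θ i j

lemma c_vanish (N : ℕ) (lam : ℕ → ℕ) (hpart : ∀ i, 1 ≤ i → lam (i+1) ≤ lam i)
    (θ : ℕ → ℕ → ℕ) (hnot : ¬ PolIneq N lam θ) :
    cfun N θ qv tv (zspec N lam) = 0 := by
  rw [PolIneq] at hnot
  push_neg at hnot
  obtain ⟨i, j0, hi1, hij0, hj0N, hviol0⟩ := hnot
  set T := (Finset.Icc (i+1) N).filter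
    (fun j => (lam i : ℤ) - lam (i+1) - Sijk N θ i (i+1) j < θ i j) with hTdef
  have hT : j0 ∈ T := by
    simp only [hTdef, Finset.mem_filter, Finset.mem_Icc]
    exact ⟨⟨hij0, hj0N⟩, by simpa [Sijk] using hviol0⟩
  have hTne : T.Nonempty := ⟨j0, hT⟩
  set J := T.max' hTne with hJdef
  have hJT : J ∈ T := T.max'_mem hTne
  simp only [hTdef, Finset.mem_filter, Finset.mem_Icc] at hJT
  obtain ⟨⟨hiJ, hJN⟩, hviol⟩ := hJT
  have hmax : ∀ k, J < k → k ≤ N →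
      (θ i k : ℤ) ≤ (lam i : ℤ) - lam (i+1) - Sijk N θ i (i+1) k := by
    intro k hk hkN
    by_contra h
    push_neg at h
    have hkT : k ∈ T := by
      simp only [hTdef, Finset.mem_filter, Finset.mem_Icc]
      exact ⟨⟨by omega, hkN⟩, h⟩
    exact absurd (T.le_max' k hkT) (by omega)
  have hSsplit : ∀ k, k < N → Sijk N θ i (i+1) k =
      ((θ i (k+1) : ℤ) - θ (i+1) (k+1)) + Sijk N θ i (i+1) (k+1) := by
    intro k hk
    rw [Sijk, Sijk, Finset.Icc_eq_cons_Ioc (by omega), Finset.sum_cons, ← Finset.Icc_add_one_left_eq_Ioc]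
  have hDnn : ∀ m k, J ≤ k → k ≤ N → N ≤ k + m →
      0 ≤ (lam i : ℤ) - lam (i+1) - Sijk N θ i (i+1) k := by
    intro m
    induction m with
    | zero =>
      intro k h1 h2 h3
      have hkN : k = N := by omega
      have hS0 : Sijk N θ i (i+1) k = 0 := by
        rw [Sijk, Finset.Icc_eq_empty (by omega), Finset.sum_empty]
      have := hpart i hi1
      omega
    | succ m ih =>
      intro k h1 h2 h3
      rcases eq_or_lt_of_le h2 with hEq | hlt
      · have hS0 : Sijk N θ i (i+1) k = 0 := by
          rw [Sijk, Finset.Icc_eq_empty (by omega), Finset.sum_empty]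
        have := hpart i hi1
        omega
      · have hk1 := hmax (k+1) (by omega) (by omega)
        have h0 := ih (k+1) (by omega) (by omega) (by omega)
        rw [hSsplit k hlt]
        have hnn : (0:ℤ) ≤ θ (i+1) (k+1) := Int.ofNat_nonneg _
        omega
  set Dm := ((lam i : ℤ) - lam (i+1) - Sijk N θ i (i+1) J).toNat with hDmdef
  have hDm : (Dm : ℤ) = (lam i : ℤ) - lam (i+1) - Sijk N θ i (i+1) J :=
    Int.toNat_of_nonneg (hDnn (N - J) J le_rfl hJN (by omega))
  have hDmlt : Dm < θ i J := by omega
  have hkey : qv ^ (Sijk N θ i (i+1) J) * tv * zspec N lam (i+1) / zspec N lam i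
      * qv ^ Dm = 1 := by
    rw [div_mul_eq_mul_div, div_eq_one_iff_eq (zspec_ne N lam i)]
    show qv ^ (Sijk N θ i (i+1) J) * tv * (tv ^ (N - (i+1)) * qv ^ (lam (i+1)))
        * qv ^ Dm = tv ^ (N - i) * qv ^ (lam i)
    have e1 : tv * tv ^ (N - (i+1)) = tv ^ (N - i) := by
      rw [← pow_succ']
      congr 1
      omega
    have e2 : qv ^ (Sijk N θ i (i+1) J) * qv ^ (lam (i+1)) * qv ^ Dm
        = qv ^ (lam i) := by
      rw [← zpow_natCast qv (lam (i+1)), ← zpow_natCast qv Dm, ← zpow_natCast qv (lam i),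
        ← zpow_add₀ qv_ne, ← zpow_add₀ qv_ne]
      congr 1
      omega
    calc qv ^ (Sijk N θ i (i+1) J) * tv * (tv ^ (N - (i+1)) * qv ^ (lam (i+1))) * qv ^ Dm
        = (tv * tv ^ (N - (i+1))) * (qv ^ (Sijk N θ i (i+1) J) * qv ^ (lam (i+1)) * qv ^ Dm) := by
          ring
      _ = tv ^ (N - i) * qv ^ (lam i) := by rw [e1, e2]
  have hpoch : qPoch (qv ^ (Sijk N θ i (i+1) J) * tv * zspec N lam (i+1) / zspec N lam i)
      qv (θ i J) = 0 := by
    rw [qPoch]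
    apply Finset.prod_eq_zero (Finset.mem_range.mpr hDmlt)
    rw [sub_eq_zero]
    exact hkey.symm
  rw [cfun]
  apply Finset.prod_eq_zero (show J ∈ Finset.Icc 2 N by rw [Finset.mem_Icc]; omega)
  apply Finset.prod_eq_zero (show i ∈ Finset.Icc 1 (J-1) by rw [Finset.mem_Icc]; omega)
  apply Finset.prod_eq_zero (show i ∈ Finset.Icc i (J-1) by rw [Finset.mem_Icc]; omega)
  rw [hpoch, zero_div, zero_mul]

theorem c_vanishes_outside_polytope_and_series_terminates (N : ℕ) (lam : ℕ → ℕ)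
    (hpart : ∀ i, 1 ≤ i → lam (i+1) ≤ lam i) (hsupp : ∀ i, N < i → lam i = 0) :
    (∀ θ : ℕ → ℕ → ℕ, IsUT N θ → ¬ PolIneq N lam θ →
      cfun N θ qv tv (zspec N lam) = 0) ∧
    ((fun d => ∑ᶠ θ ∈ {θ : ℕ → ℕ → ℕ | IsUT N θ ∧ ∀ m, d m = wt N θ m},
        cfun N θ qv tv (zspec N lam)) : MvPowerSeries ℕ Fqt)
      = fun d => ∑ᶠ θ ∈ {θ : ℕ → ℕ → ℕ |
          (IsUT N θ ∧ PolIneq N lam θ) ∧ ∀ m, d m = wt N θ m},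
        cfun N θ qv tv (zspec N lam) := by
  constructor
  · intro θ _ hnot
    exact c_vanish N lam hpart θ hnot
  · funext d
    apply finsum_mem_inter_support_eq'
    intro θ hθ
    simp only [Function.mem_support] at hθ
    constructor
    · rintro ⟨hUT, hd⟩
      refine ⟨⟨hUT, ?_⟩, hd⟩
      by_contra hnot
      exact hθ (c_vanish N lam hpart θ hnot)
    · rintro ⟨⟨hUT, _⟩, hd⟩
      exact ⟨hUT, hd⟩
end
end

section
/- Let N ≥ 2. Identify the positive roots of sl_N with the pairs (a,b), 1 ≤ a < b ≤ N, set |α_{a,b}| := b − a, and call α_{a,b} simple iff b = a+1. For i ≥ 0 let F_i be the number of pairs (A,B) of finite multisets of positive roots of sl_N such that no element of A is simple and Σ_{α∈A}(|α|−1) + Σ_{β∈B}(|β|+1) = i. Then in the formal power series ring ℚ[[t]]: (Σ_{i≥0} F_i t^i) · ∏_{k=2}^{N}(1 + t + ⋯ + t^{k−1}) = ∏_{k=2}^{N}(1 + t + ⋯ + t^{k−1}) · [∏_{m=2}^{N−1}(1 − t^m)^{2(N−m)}]^{−1} · (1 − t^N)^{−1} · (1 − t)^{−(N−2)}. (The left-hand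 side is the stable Poincaré polynomial H_0(t) = lim_α Σ_i t^i dim H^{2i}(𝒬^α,ℂ) of the Laumon quasiflag spaces, the product ∏_{k=2}^{N}(1+⋯+t^{k−1}) being the Poincaré polynomial of the flag variety of SL(N).) -/
/-!
STATEMENT 12: the stable Poincaré series of the Laumon quasiflag spaces.  The
positive roots of `sl_N` are encoded as pairs `(a,b)` with `1 ≤ a < b ≤ N`,
`|α_{a,b}| = b − a`, and `α_{a,b}` is simple iff `b = a + 1`.  `F_i` counts pairs
`(A,B)` of multisets of positive roots with no simple root in `A` and
`Σ_{α∈A}(|α|−1) + Σ_{β∈B}(|β|+1) = i`.  The claimed identity holds in `ℚ[[t]]`.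
-/

noncomputable section
open Finset PowerSeries

/-- positive roots of `sl_N` as pairs `1 ≤ a < b ≤ N`. -/
def PRoot (N : ℕ) := {p : ℕ × ℕ // 1 ≤ p.1 ∧ p.1 < p.2 ∧ p.2 ≤ N}

/-- `F_i`: the number of pairs `(A, B)` of multisets of positive roots such that
no element of `A` is simple and `Σ_{α∈A}(|α|−1) + Σ_{β∈B}(|β|+1) = i`. -/
def Fcount (N i : ℕ) : ℕ :=
  Set.ncard {AB : Multiset (PRoot N) × Multiset (PRoot N) |
    (∀ α ∈ AB.1, α.1.2 ≠ α.1.1 + 1) ∧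
    (AB.1.map fun α => α.1.2 - α.1.1 - 1).sum
      + (AB.2.map fun β => β.1.2 - β.1.1 + 1).sum = i}

lemma geom_inv (k : ℕ) (hk : 0 < k) :
    ((1 - X ^ k : PowerSeries ℚ))⁻¹ = mk fun n => if k ∣ n then 1 else 0 := by
  have hc : constantCoeff (1 - X ^ k : PowerSeries ℚ) ≠ 0 := by
    simp [zero_pow hk.ne']
  rw [PowerSeries.inv_eq_iff_mul_eq_one hc]
  ext n
  rw [mul_sub, mul_one, map_sub, PowerSeries.coeff_mul_X_pow']
  simp only [coeff_mk, coeff_one]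
  rcases Nat.eq_zero_or_pos n with rfl | hn
  · simp [hk.ne', Nat.not_le.mpr hk]
  · by_cases h : k ≤ n
    · have : k ∣ n ↔ k ∣ n - k := by
        constructor
        · intro hd; exact (Nat.dvd_sub hd dvd_rfl)
        · intro hd; have := Nat.dvd_add hd dvd_rfl; rwa [Nat.sub_add_cancel h] at this
      simp only [this]
      simp [h, hn.ne']
    · have : ¬ k ∣ n := fun hd => h (Nat.le_of_dvd hn hd)
      simp [h, hn.ne', this]

lemma count_eq_coeff {σ : Type} [Fintype σ] [DecidableEq σ] (w : σ → ℕ)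
    (hw : ∀ s, 0 < w s) (i : ℕ) :
    (Set.ncard {m : Multiset σ | (m.map w).sum = i} : ℚ)
      = coeff i (∏ s : σ, (1 - X ^ w s)⁻¹) := by
  classical
  have hws : ∀ m : Multiset σ, (m.map w).sum = ∑ s : σ, m.count s * w s := by
    intro m
    rw [Finset.sum_multiset_map_count]
    refine Finset.sum_subset (Finset.subset_univ _) ?_
    intro s _ hs
    rw [Multiset.count_eq_zero_of_notMem (by simpa using hs)]
    simp
  set L : Multiset σ → (σ →₀ ℕ) :=
    fun m => Finsupp.equivFunOnFinite.symm fun s => w s * m.count s with hL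
  have hLapp : ∀ m s, L m s = w s * m.count s := fun m s => rfl
  have hinj : Function.Injective L := by
    intro m m' h
    have h2 : ∀ s, w s * m.count s = w s * m'.count s := by
      intro s; rw [← hLapp m s, ← hLapp m' s, h]
    ext s
    exact Nat.eq_of_mul_eq_mul_left (hw s) (h2 s)
  have main : Set.ncard {m : Multiset σ | (m.map w).sum = i}
      = ((Finset.finsuppAntidiag (Finset.univ : Finset σ) i).filter
          (fun l : σ →₀ ℕ => ∀ s ∈ Finset.univ, w s ∣ l s)).card := by
    rw [← Set.ncard_coe_finset]
    have himg : (↑((Finset.finsuppAntidiag Finset.univ i).filter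
          (fun l : σ →₀ ℕ => ∀ s ∈ Finset.univ, w s ∣ l s)) : Set (σ →₀ ℕ))
        = L '' {m : Multiset σ | (m.map w).sum = i} := by
      ext l
      simp only [Finset.coe_filter, Set.mem_setOf_eq, Finset.mem_finsuppAntidiag,
        Set.mem_image, Finset.mem_univ, forall_true_left]
      constructor
      · rintro ⟨⟨hsum, -⟩, hdvd⟩
        refine ⟨(Finsupp.equivFunOnFinite.symm fun s => l s / w s).toMultiset, ?_, ?_⟩
        · rw [hws]
          have hcnt : ∀ s : σ,
              (Finsupp.equivFunOnFinite.symm fun s => l s / w s).toMultiset.count s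
              = l s / w s := by
            intro s; rw [Finsupp.count_toMultiset]; rfl
          calc ∑ s : σ, _ * w s = ∑ s : σ, l s := by
                refine Finset.sum_congr rfl fun s _ => ?_
                rw [hcnt s, Nat.div_mul_cancel (hdvd s)]
            _ = i := hsum
        · ext s
          rw [hLapp]
          have hcnt : (Finsupp.equivFunOnFinite.symm fun s => l s / w s).toMultiset.count s
              = l s / w s := by rw [Finsupp.count_toMultiset]; rfl
          rw [hcnt, Nat.mul_div_cancel' (hdvd s)]
      · rintro ⟨m, hm, rfl⟩
        refine ⟨⟨?_, Finset.subset_univ _⟩, fun s => ?_⟩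
        · rw [hws] at hm
          rw [← hm]
          refine Finset.sum_congr rfl fun s _ => ?_
          rw [hLapp, mul_comm]
        · rw [hLapp]; exact Dvd.intro _ rfl
    rw [himg, Set.ncard_image_of_injective _ hinj]
  have h1 : ∀ s : σ, ((1 - X ^ w s : PowerSeries ℚ))⁻¹
      = mk fun n => if w s ∣ n then 1 else 0 := fun s => geom_inv _ (hw s)
  simp_rw [h1]
  rw [PowerSeries.coeff_prod]
  simp only [coeff_mk]
  rw [Finset.sum_congr rfl (fun l _ => Finset.prod_boole), main, Finset.card_filter,
    Nat.cast_sum]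
  exact Finset.sum_congr rfl fun l _ => by split_ifs <;> simp

instance (N : ℕ) : DecidableEq (PRoot N) := by unfold PRoot; infer_instance

instance (N : ℕ) : Fintype (PRoot N) :=
  Fintype.ofInjective
    (fun p : PRoot N => ((⟨p.1.1, by have := p.2; omega⟩ : Fin (N+1)), (⟨p.1.2, by
      have := p.2; omega⟩ : Fin (N+1))))
    (by
      intro p q h
      have h1 : p.1.1 = q.1.1 := congrArg (fun x => (x.1 : ℕ)) h
      have h2 : p.1.2 = q.1.2 := congrArg (fun x => (x.2 : ℕ)) h
      exact Subtype.ext (Prod.ext h1 h2))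

/-- the non-simple positive roots -/
def NRoot (N : ℕ) : Type := {α : PRoot N // α.1.2 ≠ α.1.1 + 1}

instance (N : ℕ) : DecidableEq (NRoot N) := by unfold NRoot; infer_instance
instance (N : ℕ) : Fintype (NRoot N) := by unfold NRoot; exact Subtype.fintype _

lemma card_height (N m : ℕ) (hm : 1 ≤ m) (hm2 : m ≤ N) :
    (Finset.univ.filter (fun p : PRoot N => p.1.2 - p.1.1 = m)).card = N - m := by
  have : (Finset.univ.filter (fun p : PRoot N => p.1.2 - p.1.1 = m)).card
      = (Finset.Icc 1 (N - m)).card := by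
    refine Finset.card_bij' (fun p _ => p.1.1) (fun a ha => ⟨(a, a + m), ?_⟩) ?_ ?_ ?_ ?_
    · have ha' := Finset.mem_Icc.mp ha
      exact ⟨ha'.1, by omega, by omega⟩
    · intro p hp
      simp only [Finset.mem_filter, Finset.mem_univ, true_and] at hp
      have := p.2
      simp only [Finset.mem_Icc]
      omega
    · intro a ha
      exact Finset.mem_filter.mpr ⟨Finset.mem_univ _, show a + m - a = m by omega⟩
    · intro p hp
      simp only [Finset.mem_filter, Finset.mem_univ, true_and] at hp
      have h2 := p.2
      refine Subtype.ext (Prod.ext rfl ?_)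
      show p.1.1 + m = p.1.2
      omega
    · intro a ha
      rfl
  rw [this, Nat.card_Icc]
  omega

lemma card_nheight (N v : ℕ) (hv : 1 ≤ v) (hv2 : v + 1 ≤ N) :
    (Finset.univ.filter (fun a : NRoot N => a.1.1.2 - a.1.1.1 - 1 = v)).card = N - 1 - v := by
  have : (Finset.univ.filter (fun a : NRoot N => a.1.1.2 - a.1.1.1 - 1 = v)).card
      = (Finset.univ.filter (fun p : PRoot N => p.1.2 - p.1.1 = v + 1)).card := by
    refine Finset.card_bij' (fun a _ => a.1) (fun p hp => ⟨p, ?_⟩) ?_ ?_ ?_ ?_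
    · simp only [Finset.mem_filter, Finset.mem_univ, true_and] at hp
      have := p.2
      omega
    · intro a ha
      simp only [Finset.mem_filter, Finset.mem_univ, true_and] at ha ⊢
      have := a.1.2
      omega
    · intro p hp
      simp only [Finset.mem_filter, Finset.mem_univ, true_and] at hp
      have := p.2
      exact Finset.mem_filter.mpr ⟨Finset.mem_univ _, show p.1.2 - p.1.1 - 1 = v by omega⟩
    · intro a _; rfl
    · intro p _; rfl
  rw [this, card_height N (v+1) (by omega) hv2]
  omega

/-- combined weight function on nonsimple ⊕ all roots -/
def W (N : ℕ) (s : NRoot N ⊕ PRoot N) : ℕ :=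
  Sum.elim (fun a => a.1.1.2 - a.1.1.1 - 1) (fun b => b.1.2 - b.1.1 + 1) s

lemma psi_surj {γ δ : Type*} (m : Multiset (γ ⊕ δ)) :
    ∃ a : Multiset γ, ∃ b : Multiset δ, a.map Sum.inl + b.map Sum.inr = m := by
  induction m using Multiset.induction_on with
  | empty => exact ⟨0, 0, by simp⟩
  | cons s m ih =>
    obtain ⟨a, b, rfl⟩ := ih
    cases s with
    | inl x =>
      exact ⟨x ::ₘ a, b, by rw [Multiset.map_cons, Multiset.cons_add]⟩
    | inr y =>
      refine ⟨a, y ::ₘ b, ?_⟩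
      rw [Multiset.map_cons, add_comm, Multiset.cons_add, add_comm]

lemma psi_inj {γ δ : Type*} [DecidableEq γ] [DecidableEq δ] :
    Function.Injective (fun ab : Multiset γ × Multiset δ =>
      ab.1.map Sum.inl + ab.2.map Sum.inr) := by
  intro ab ab' h
  simp only at h
  have hinl : ∀ (u : Multiset γ) (v : Multiset δ) (x : γ),
      (u.map Sum.inl + v.map Sum.inr).count (Sum.inl x : γ ⊕ δ) = u.count x := by
    intro u v x
    have hz : (v.map Sum.inr).count (Sum.inl x : γ ⊕ δ) = 0 := by
      refine Multiset.count_eq_zero_of_notMem ?_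
      intro hmem
      obtain ⟨y, _, hy⟩ := Multiset.mem_map.mp hmem
      exact absurd hy (by simp)
    rw [Multiset.count_add, Multiset.count_map_eq_count' _ _ Sum.inl_injective, hz, add_zero]
  have hinr : ∀ (u : Multiset γ) (v : Multiset δ) (x : δ),
      (u.map Sum.inl + v.map Sum.inr).count (Sum.inr x : γ ⊕ δ) = v.count x := by
    intro u v x
    have hz : (u.map Sum.inl).count (Sum.inr x : γ ⊕ δ) = 0 := by
      refine Multiset.count_eq_zero_of_notMem ?_
      intro hmem
      obtain ⟨y, _, hy⟩ := Multiset.mem_map.mp hmem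
      exact absurd hy (by simp)
    rw [Multiset.count_add, Multiset.count_map_eq_count' _ _ Sum.inr_injective, hz, zero_add]
  refine Prod.ext ?_ ?_
  · ext x
    rw [← hinl ab.1 ab.2 x, ← hinl ab'.1 ab'.2 x, h]
  · ext x
    rw [← hinr ab.1 ab.2 x, ← hinr ab'.1 ab'.2 x, h]

lemma fcount_eq (N i : ℕ) :
    Fcount N i
      = Set.ncard {m : Multiset (NRoot N ⊕ PRoot N) | (m.map (W N)).sum = i} := by
  classical
  set T : Set (Multiset (NRoot N) × Multiset (PRoot N)) :=
    {ab | (ab.1.map fun a => a.1.1.2 - a.1.1.1 - 1).sum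
        + (ab.2.map fun b => b.1.2 - b.1.1 + 1).sum = i} with hT
  have step1 : Fcount N i = T.ncard := by
    rw [Fcount]
    have himg : {AB : Multiset (PRoot N) × Multiset (PRoot N) |
        (∀ α ∈ AB.1, α.1.2 ≠ α.1.1 + 1) ∧
        (AB.1.map fun α => α.1.2 - α.1.1 - 1).sum
          + (AB.2.map fun β => β.1.2 - β.1.1 + 1).sum = i}
        = (fun ab : Multiset (NRoot N) × Multiset (PRoot N) =>
            (ab.1.map Subtype.val, ab.2)) '' T := by
      ext ⟨A, B⟩
      simp only [Set.mem_setOf_eq, Set.mem_image, hT, Prod.mk.injEq, Prod.exists]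
      constructor
      · rintro ⟨hA, hsum⟩
        refine ⟨A.attach.map (fun x => (⟨x.1, hA x.1 x.2⟩ : NRoot N)), B, ?_, ?_, rfl⟩
        · erw [Multiset.map_map]
          show ((A.attach.map fun x => x.1.1.2 - x.1.1.1 - 1)).sum
              + (B.map fun β => β.1.2 - β.1.1 + 1).sum = i
          rw [Multiset.attach_map_val' A (fun α => α.1.2 - α.1.1 - 1)]
          exact hsum
        · erw [Multiset.map_map]
          exact Multiset.attach_map_val A
      · rintro ⟨a, b, hsum, rfl, rfl⟩
        constructor
        · intro α hα
          obtain ⟨x, _, rfl⟩ := Multiset.mem_map.mp hα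
          exact x.2
        · erw [Multiset.map_map]
          exact hsum
    rw [himg, Set.ncard_image_of_injective _ ?_]
    intro ab ab' h
    have h1 := congrArg Prod.fst h
    have h2 := congrArg Prod.snd h
    simp only at h1 h2
    exact Prod.ext (Multiset.map_injective Subtype.val_injective h1) h2
  have step2 : {m : Multiset (NRoot N ⊕ PRoot N) | (m.map (W N)).sum = i}
      = (fun ab : Multiset (NRoot N) × Multiset (PRoot N) =>
          ab.1.map Sum.inl + ab.2.map Sum.inr) '' T := by
    ext m
    simp only [Set.mem_setOf_eq, Set.mem_image, hT, Prod.exists]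
    have key : ∀ (a : Multiset (NRoot N)) (b : Multiset (PRoot N)),
        ((a.map Sum.inl + b.map Sum.inr).map (W N)).sum
          = (a.map fun x => x.1.1.2 - x.1.1.1 - 1).sum
            + (b.map fun x => x.1.2 - x.1.1 + 1).sum := by
      intro a b
      rw [Multiset.map_add, Multiset.sum_add, Multiset.map_map, Multiset.map_map]
      rfl
    constructor
    · intro hm
      obtain ⟨a, b, rfl⟩ := psi_surj m
      exact ⟨a, b, by rw [← key]; exact hm, rfl⟩
    · rintro ⟨a, b, hsum, rfl⟩
      rw [key]; exact hsum
  rw [step1, step2, Set.ncard_image_of_injective _ psi_inj]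

lemma prod_comp_fiber {α : Type} [Fintype α] [DecidableEq α] (g : α → ℕ) (t : Finset ℕ)
    (hmap : ∀ a, g a ∈ t) (F : ℕ → PowerSeries ℚ) :
    ∏ a : α, F (g a) = ∏ v ∈ t, F v ^ (Finset.univ.filter (fun a => g a = v)).card := by
  rw [← Finset.prod_fiberwise_of_maps_to (fun a _ => hmap a) (fun a => F (g a))]
  refine Finset.prod_congr rfl fun v hv => ?_
  rw [Finset.prod_congr rfl (fun a ha => ?_), Finset.prod_const]
  rw [(Finset.mem_filter.mp ha).2]

lemma prodinv_mul (t : Finset ℕ) (e : ℕ → ℕ) (ht : ∀ v ∈ t, 1 ≤ v) :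
    (∏ v ∈ t, (((1 : PowerSeries ℚ) - X ^ v)⁻¹) ^ e v)
      * (∏ v ∈ t, ((1 : PowerSeries ℚ) - X ^ v) ^ e v) = 1 := by
  rw [← Finset.prod_mul_distrib]
  refine Finset.prod_eq_one fun v hv => ?_
  rw [← mul_pow, PowerSeries.inv_mul_cancel _ ?_, one_pow]
  have : (1 ≤ v) := ht v hv
  simp [zero_pow (by omega : v ≠ 0)]

lemma cc_ne (v : ℕ) (hv : 1 ≤ v) : constantCoeff ((1 : PowerSeries ℚ) - X ^ v) ≠ 0 := by
  simp [zero_pow (by omega : v ≠ 0)]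

lemma denom_split (N : ℕ) (hN : 2 ≤ N) :
    (∏ v ∈ Finset.Icc 1 (N-2), ((1:PowerSeries ℚ) - X^v)^(N-1-v))
      * (∏ u ∈ Finset.Icc 2 N, ((1:PowerSeries ℚ) - X^u)^(N+1-u))
    = (∏ m ∈ Finset.Icc 2 (N-1), ((1:PowerSeries ℚ) - X^m)^(2*(N-m)))
      * (1 - X^N) * (1-X)^(N-2) := by
  set f : ℕ → PowerSeries ℚ := fun v => (1 - X^v)^(N-1-v) with hf
  set g : ℕ → PowerSeries ℚ := fun v => (1 - X^v)^(N+1-v) with hg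
  have e0 : Finset.Icc 2 N = insert N (Finset.Icc 2 (N-1)) := by
    ext x; simp only [Finset.mem_Icc, Finset.mem_insert]; omega
  have e1 : Finset.Icc 1 (N-1) = insert 1 (Finset.Icc 2 (N-1)) := by
    ext x; simp only [Finset.mem_Icc, Finset.mem_insert]; omega
  have e2 : Finset.Icc 1 (N-1) = insert (N-1) (Finset.Icc 1 (N-2)) := by
    ext x; simp only [Finset.mem_Icc, Finset.mem_insert]; omega
  have hA : (∏ v ∈ Finset.Icc 1 (N-2), f v) = (1-X)^(N-2) * ∏ v ∈ Finset.Icc 2 (N-1), f v := by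
    have h1 : (∏ v ∈ Finset.Icc 1 (N-1), f v) = f (N-1) * ∏ v ∈ Finset.Icc 1 (N-2), f v := by
      rw [e2, Finset.prod_insert (by simp only [Finset.mem_Icc]; omega)]
    have h2 : (∏ v ∈ Finset.Icc 1 (N-1), f v) = f 1 * ∏ v ∈ Finset.Icc 2 (N-1), f v := by
      rw [e1, Finset.prod_insert (by simp only [Finset.mem_Icc]; omega)]
    have hfN : f (N-1) = 1 := by
      rw [hf]; simp only; rw [(by omega : N-1-(N-1) = 0), pow_zero]
    have hf1 : f 1 = (1-X)^(N-2) := by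
      rw [hf]; simp only; rw [(by omega : N-1-1 = N-2), pow_one]
    rw [hfN, one_mul] at h1
    rw [← h1, h2, hf1]
  have hB : (∏ u ∈ Finset.Icc 2 N, g u) = (1 - X^N) * ∏ u ∈ Finset.Icc 2 (N-1), g u := by
    rw [e0, Finset.prod_insert (by simp only [Finset.mem_Icc]; omega)]
    congr 1
    rw [hg]; simp only; rw [(by omega : N+1-N = 1), pow_one]
  have hmid : (∏ v ∈ Finset.Icc 2 (N-1), f v) * (∏ v ∈ Finset.Icc 2 (N-1), g v)
      = ∏ m ∈ Finset.Icc 2 (N-1), ((1:PowerSeries ℚ) - X^m)^(2*(N-m)) := by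
    rw [← Finset.prod_mul_distrib]
    refine Finset.prod_congr rfl fun m hm => ?_
    have hm' := Finset.mem_Icc.mp hm
    rw [hf, hg]; simp only
    rw [← pow_add, (by omega : N-1-m + (N+1-m) = 2*(N-m))]
  calc (∏ v ∈ Finset.Icc 1 (N-2), f v) * (∏ u ∈ Finset.Icc 2 N, g u)
      = ((∏ v ∈ Finset.Icc 2 (N-1), f v) * (∏ v ∈ Finset.Icc 2 (N-1), g v))
        * (1 - X^N) * (1-X)^(N-2) := by rw [hA, hB]; ring
    _ = _ := by rw [hmid]


lemma cc_prod_ne (t : Finset ℕ) (e : ℕ → ℕ) (h : ∀ v ∈ t, 1 ≤ v) :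
    constantCoeff (∏ v ∈ t, ((1 : PowerSeries ℚ) - X ^ v) ^ e v) ≠ 0 := by
  rw [map_prod]
  rw [Finset.prod_ne_zero_iff]
  intro v hv
  rw [map_pow]
  exact pow_ne_zero _ (cc_ne v (h v hv))

lemma cancel_helper (x y d : PowerSeries ℚ) (hx : x * d = 1) (hy : y * d = 1) : x = y := by
  calc x = x * (y * d) := by rw [hy, mul_one]
    _ = y * (x * d) := by ring
    _ = y := by rw [hx, mul_one]

theorem stable_poincare_series_of_laumon_spaces (N : ℕ) (hN : 2 ≤ N) :
    (PowerSeries.mk fun i => (Fcount N i : ℚ)) *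
      (∏ k ∈ Finset.Icc 2 N, ∑ j ∈ Finset.range k, (PowerSeries.X : PowerSeries ℚ) ^ j)
    = (∏ k ∈ Finset.Icc 2 N, ∑ j ∈ Finset.range k, (PowerSeries.X : PowerSeries ℚ) ^ j) *
      (∏ m ∈ Finset.Icc 2 (N-1), (1 - (PowerSeries.X : PowerSeries ℚ) ^ m) ^ (2*(N-m)))⁻¹ *
      (1 - (PowerSeries.X : PowerSeries ℚ) ^ N)⁻¹ *
      ((1 - (PowerSeries.X : PowerSeries ℚ)) ^ (N-2))⁻¹ := by
  classical
  have hw : ∀ s : NRoot N ⊕ PRoot N, 0 < W N s := by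
    rintro (a | b)
    · have h1 := a.1.2
      have h2 := a.2
      show 0 < a.1.1.2 - a.1.1.1 - 1
      omega
    · show 0 < b.1.2 - b.1.1 + 1
      omega
  -- the generating function as a product over roots
  have hF : (PowerSeries.mk fun i => (Fcount N i : ℚ))
      = ∏ s : NRoot N ⊕ PRoot N, (1 - X ^ W N s)⁻¹ := by
    ext i
    rw [coeff_mk, fcount_eq]
    exact count_eq_coeff (W N) hw i
  -- regroup the product by weights
  have hreg : (∏ s : NRoot N ⊕ PRoot N, ((1 : PowerSeries ℚ) - X ^ W N s)⁻¹)
      = (∏ v ∈ Finset.Icc 1 (N-2), (((1:PowerSeries ℚ) - X^v)⁻¹)^(N-1-v))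
        * (∏ u ∈ Finset.Icc 2 N, (((1:PowerSeries ℚ) - X^u)⁻¹)^(N+1-u)) := by
    rw [Fintype.prod_sum_type]
    congr 1
    · have := prod_comp_fiber (fun a : NRoot N => a.1.1.2 - a.1.1.1 - 1)
        (Finset.Icc 1 (N-2)) (fun a => by
          have h1 := a.1.2
          have h2 := a.2
          simp only [Finset.mem_Icc]
          omega) (fun v => ((1:PowerSeries ℚ) - X^v)⁻¹)
      rw [show (∏ a : NRoot N, ((1 : PowerSeries ℚ) - X ^ W N (Sum.inl a))⁻¹)
          = ∏ a : NRoot N, ((1:PowerSeries ℚ) - X^(a.1.1.2 - a.1.1.1 - 1))⁻¹ from rfl, this]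
      refine Finset.prod_congr rfl fun v hv => ?_
      have hv' := Finset.mem_Icc.mp hv
      rw [card_nheight N v hv'.1 (by omega)]
    · have := prod_comp_fiber (fun b : PRoot N => b.1.2 - b.1.1 + 1)
        (Finset.Icc 2 N) (fun b => by
          have h1 := b.2
          simp only [Finset.mem_Icc]
          omega) (fun v => ((1:PowerSeries ℚ) - X^v)⁻¹)
      rw [show (∏ b : PRoot N, ((1 : PowerSeries ℚ) - X ^ W N (Sum.inr b))⁻¹)
          = ∏ b : PRoot N, ((1:PowerSeries ℚ) - X^(b.1.2 - b.1.1 + 1))⁻¹ from rfl, this]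
      refine Finset.prod_congr rfl fun u hu => ?_
      have hu' := Finset.mem_Icc.mp hu
      have hfil : Finset.univ.filter (fun b : PRoot N => b.1.2 - b.1.1 + 1 = u)
          = Finset.univ.filter (fun b : PRoot N => b.1.2 - b.1.1 = u - 1) := by
        refine Finset.filter_congr fun b _ => ?_
        have h1 := b.2
        constructor <;> intro h <;> omega
      rw [hfil, card_height N (u-1) (by omega) (by omega), (by omega : N - (u-1) = N+1-u)]
  -- the key identity between the two inverse products
  set A := ∏ v ∈ Finset.Icc 1 (N-2), (((1:PowerSeries ℚ) - X^v)⁻¹)^(N-1-v) with hA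
  set B := ∏ u ∈ Finset.Icc 2 N, (((1:PowerSeries ℚ) - X^u)⁻¹)^(N+1-u) with hB
  set DA := ∏ v ∈ Finset.Icc 1 (N-2), ((1:PowerSeries ℚ) - X^v)^(N-1-v) with hDA
  set DB := ∏ u ∈ Finset.Icc 2 N, ((1:PowerSeries ℚ) - X^u)^(N+1-u) with hDB
  set I1 := (∏ m ∈ Finset.Icc 2 (N-1), ((1:PowerSeries ℚ) - X ^ m) ^ (2*(N-m)))⁻¹ with hI1
  set I2 := ((1:PowerSeries ℚ) - X ^ N)⁻¹ with hI2
  set I3 := (((1:PowerSeries ℚ) - X) ^ (N-2))⁻¹ with hI3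
  have hx : (A * B) * (DA * DB) = 1 := by
    have h1 : A * DA = 1 := prodinv_mul _ _ (fun v hv => (Finset.mem_Icc.mp hv).1)
    have h2 : B * DB = 1 := prodinv_mul _ _ (fun u hu => by
      have := (Finset.mem_Icc.mp hu).1; omega)
    calc (A * B) * (DA * DB) = (A * DA) * (B * DB) := by ring
      _ = 1 := by rw [h1, h2, mul_one]
  have hy : (I1 * I2 * I3) * (DA * DB) = 1 := by
    have hsplit : DA * DB
        = (∏ m ∈ Finset.Icc 2 (N-1), ((1:PowerSeries ℚ) - X^m)^(2*(N-m)))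
          * (1 - X^N) * (1-X)^(N-2) := denom_split N hN
    rw [hsplit]
    have h1 : I1 * (∏ m ∈ Finset.Icc 2 (N-1), ((1:PowerSeries ℚ) - X^m)^(2*(N-m))) = 1 := by
      rw [hI1]
      exact PowerSeries.inv_mul_cancel _
        (cc_prod_ne _ _ (fun m hm => by have := (Finset.mem_Icc.mp hm).1; omega))
    have h2 : I2 * ((1:PowerSeries ℚ) - X^N) = 1 := by
      rw [hI2]
      exact PowerSeries.inv_mul_cancel _ (cc_ne N (by omega))
    have h3 : I3 * ((1:PowerSeries ℚ) - X)^(N-2) = 1 := by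
      rw [hI3]
      refine PowerSeries.inv_mul_cancel _ ?_
      rw [map_pow]
      refine pow_ne_zero _ ?_
      have := cc_ne 1 (le_refl 1)
      rwa [pow_one] at this
    calc (I1 * I2 * I3) * ((∏ m ∈ Finset.Icc 2 (N-1), ((1:PowerSeries ℚ) - X^m)^(2*(N-m)))
          * (1 - X^N) * (1-X)^(N-2))
        = (I1 * (∏ m ∈ Finset.Icc 2 (N-1), ((1:PowerSeries ℚ) - X^m)^(2*(N-m))))
          * (I2 * (1 - X^N)) * (I3 * (1-X)^(N-2)) := by ring
      _ = 1 := by rw [h1, h2, h3]; simp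
  have key : A * B = I1 * I2 * I3 := cancel_helper _ _ _ hx hy
  rw [hF, hreg, key]
  ring
end
end
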